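/- arXiv:1604.04162 — 2 statements merged into one kernel-verified Lean document; each statement's English description precedes it below -/
import Mathlib

section
/- Let G be a group and let A, B be commensurated subgroups of G such that A normalizes B. Then the product AB is a commensurated subgroup of G. -/
open scoped Pointwise

/-- The conjugate subgroup `gHg⁻¹`. -/
def conjS {G : Type*} [Group G] (g : G) (H : Subgroup G) : Subgroup G :=
  H.map (MulAut.conj g).toMonoidHom

/-- `H` is commensurated: for every `g`, `gHg⁻¹ ∩ H` has finite index in both
`H` and `gHg⁻¹`. -/
def Commensurated {G : Type*} [Group G] (H : Subgroup G) : Prop :=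
  ∀ g : G, (conjS g H ⊓ H).relIndex H ≠ 0 ∧ (conjS g H ⊓ H).relIndex (conjS g H) ≠ 0

section Aux

variable {G : Type*} [Group G]

lemma mem_conjS {g x : G} {H : Subgroup G} : x ∈ conjS g H ↔ g⁻¹ * x * g ∈ H := by
  rw [conjS, Subgroup.mem_map_equiv]
  simp [MulAut.conj, mul_assoc]

lemma conjS_sup (g : G) (A B : Subgroup G) :
    conjS g (A ⊔ B) = conjS g A ⊔ conjS g B := by
  simp [conjS, Subgroup.map_sup]

lemma conjS_le_normalizer {g : G} {A B : Subgroup G} (h : A ≤ Subgroup.normalizer (B : Set G)) :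
    conjS g A ≤ Subgroup.normalizer (conjS g B : Set G) := by
  intro x hx
  rw [mem_conjS] at hx
  have ha := h hx
  rw [Subgroup.mem_normalizer_iff] at ha ⊢
  intro b
  rw [mem_conjS, mem_conjS]
  have := ha (g⁻¹ * b * g)
  constructor
  · intro hb
    have := this.mp hb
    convert this using 1
    group
  · intro hb
    apply this.mpr
    convert hb using 1
    group

/-- Carrier of `A ⊔ B` is `A * B` when `A` normalizes `B`. -/
lemma coe_sup_of_le_normalizer {A B : Subgroup G} (h : A ≤ Subgroup.normalizer (B : Set G)) :
    ((A ⊔ B : Subgroup G) : Set G) = (A : Set G) * (B : Set G) := by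
  have hconj : ∀ a ∈ A, ∀ b ∈ B, a * b * a⁻¹ ∈ B := fun a ha b hb =>
    (Subgroup.mem_normalizer_iff.mp (h ha) b).mp hb
  let P : Subgroup G :=
    { carrier := (A : Set G) * (B : Set G)
      one_mem' := ⟨1, A.one_mem, 1, B.one_mem, mul_one 1⟩
      mul_mem' := by
        rintro x y ⟨a1, ha1, b1, hb1, rfl⟩ ⟨a2, ha2, b2, hb2, rfl⟩
        refine ⟨a1 * a2, A.mul_mem ha1 ha2, (a2⁻¹ * b1 * a2) * b2,
          B.mul_mem ?_ hb2, by group⟩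
        simpa using hconj a2⁻¹ (A.inv_mem ha2) b1 hb1
      inv_mem' := by
        rintro x ⟨a, ha, b, hb, rfl⟩
        refine ⟨a⁻¹, A.inv_mem ha, a * b⁻¹ * a⁻¹, hconj a ha b⁻¹ (B.inv_mem hb), by group⟩ }
  apply Set.Subset.antisymm
  · have : A ⊔ B ≤ P := by
      refine sup_le ?_ ?_
      · intro a ha; exact ⟨a, ha, 1, B.one_mem, mul_one a⟩
      · intro b hb; exact ⟨1, A.one_mem, b, hb, one_mul b⟩
    exact this
  · rintro x ⟨a, ha, b, hb, rfl⟩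
    exact Subgroup.mul_mem _ (Subgroup.mem_sup_left ha) (Subgroup.mem_sup_right hb)

lemma set_mul_comm_of_le_normalizer {A B : Subgroup G} (h : A ≤ Subgroup.normalizer (B : Set G)) :
    (A : Set G) * (B : Set G) = (B : Set G) * (A : Set G) := by
  ext x
  constructor
  · rintro ⟨a, ha, b, hb, rfl⟩
    exact ⟨a * b * a⁻¹, (Subgroup.mem_normalizer_iff.mp (h ha) b).mp hb, a, ha, by group⟩
  · rintro ⟨b, hb, a, ha, rfl⟩
    refine ⟨a, ha, a⁻¹ * b * a, ?_, by group⟩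
    simpa using (Subgroup.mem_normalizer_iff.mp (h (A.inv_mem ha)) b).mp hb

/-- If `K ⊆ L * H` with `L, H ≤ K` and `H` has finite relative index in `L`,
then `H` has finite relative index in `K`. -/
lemma relindex_ne_zero_of_cover {H K L : Subgroup G} (hLK : L ≤ K) (hHK : H ≤ K)
    (hcov : (K : Set G) ⊆ (L : Set G) * (H : Set G)) (hfin : H.relIndex L ≠ 0) :
    H.relIndex K ≠ 0 := by
  have hfinL : Finite (L ⧸ (H.subgroupOf L)) := by
    apply Nat.finite_of_card_ne_zero
    rwa [← Subgroup.index_eq_card]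
  let F : L → K ⧸ (H.subgroupOf K) := fun l => QuotientGroup.mk ⟨l, hLK l.2⟩
  have hresp : ∀ a b : L, (QuotientGroup.leftRel (H.subgroupOf L)) a b → F a = F b := by
    intro a b hab
    rw [QuotientGroup.leftRel_apply] at hab
    apply (QuotientGroup.eq).mpr
    simpa [Subgroup.mem_subgroupOf] using hab
  let f : L ⧸ (H.subgroupOf L) → K ⧸ (H.subgroupOf K) := Quotient.lift F hresp
  have hsurj : Function.Surjective f := by
    intro q
    induction q using QuotientGroup.induction_on with
    | H x =>
      obtain ⟨l, hl, hh, hhH, hx⟩ := hcov x.2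
      refine ⟨QuotientGroup.mk ⟨l, hl⟩, ?_⟩
      have hfl : f (QuotientGroup.mk ⟨l, hl⟩) = F ⟨l, hl⟩ := rfl
      rw [hfl]
      show QuotientGroup.mk (⟨l, hLK hl⟩ : K) = QuotientGroup.mk x
      rw [QuotientGroup.eq]
      have hgoal : (l : G)⁻¹ * ↑x ∈ H := by
        rw [← hx, inv_mul_cancel_left]; exact hhH
      simpa [Subgroup.mem_subgroupOf] using hgoal
  have : Finite (K ⧸ (H.subgroupOf K)) := Finite.of_surjective f hsurj
  show (H.subgroupOf K).index ≠ 0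
  rw [Subgroup.index_eq_card]
  exact Nat.card_ne_zero.mpr ⟨⟨QuotientGroup.mk 1⟩, this⟩

/-- Main lemma: if `A` normalizes `B`, `A₀ ≤ A` and `B₀ ≤ B` with finite relative
indices, then `A₀ ⊔ B₀` has finite relative index in `A ⊔ B`. -/
lemma sup_relindex_ne_zero {A B A₀ B₀ : Subgroup G} (hnorm : A ≤ Subgroup.normalizer (B : Set G))
    (hA0 : A₀ ≤ A) (hB0 : B₀ ≤ B)
    (hA : A₀.relIndex A ≠ 0) (hB : B₀.relIndex B ≠ 0) :
    (A₀ ⊔ B₀).relIndex (A ⊔ B) ≠ 0 := by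
  set C := A₀ ⊔ B₀ with hC
  set D := A₀ ⊔ B with hD
  have hCD : C ≤ D := sup_le_sup_left hB0 A₀
  have hDAB : D ≤ A ⊔ B := sup_le_sup_right hA0 B
  have hA0norm : A₀ ≤ Subgroup.normalizer (B : Set G) := hA0.trans hnorm
  -- step (i): D has finite relindex in A ⊔ B
  have hi : D.relIndex (A ⊔ B) ≠ 0 := by
    refine relindex_ne_zero_of_cover le_sup_left hDAB ?_ ?_
    · rw [coe_sup_of_le_normalizer hnorm]
      exact Set.mul_subset_mul_left (fun x hx => (le_sup_right : B ≤ D) hx)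
    · intro h0
      exact hA (eq_zero_of_zero_dvd (h0 ▸ Subgroup.relIndex_dvd_of_le_left A
        (le_sup_left : A₀ ≤ D)))
  -- step (ii): C has finite relindex in D
  have hii : C.relIndex D ≠ 0 := by
    refine relindex_ne_zero_of_cover le_sup_right hCD ?_ ?_
    · rw [hD, coe_sup_of_le_normalizer hA0norm, set_mul_comm_of_le_normalizer hA0norm]
      exact Set.mul_subset_mul_left (fun x hx => (le_sup_left : A₀ ≤ C) hx)
    · intro h0
      exact hB (eq_zero_of_zero_dvd (h0 ▸ Subgroup.relIndex_dvd_of_le_left B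
        (le_sup_right : B₀ ≤ C)))
  rw [← Subgroup.relIndex_mul_relIndex C D (A ⊔ B) hCD hDAB]
  exact mul_ne_zero hii hi

end Aux

theorem stmt_0 {G : Type*} [Group G] (A B : Subgroup G)
    (hA : Commensurated A) (hB : Commensurated B)
    (hnorm : A ≤ Subgroup.normalizer (B : Set G)) :
    ((A ⊔ B : Subgroup G) : Set G) = (A : Set G) * (B : Set G) ∧
      Commensurated (A ⊔ B) := by
  refine ⟨coe_sup_of_le_normalizer hnorm, ?_⟩
  intro g
  set A' := conjS g A with hA'
  set B' := conjS g B with hB'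
  have hconj_sup : conjS g (A ⊔ B) = A' ⊔ B' := conjS_sup g A B
  have hnorm' : A' ≤ Subgroup.normalizer (B' : Set G) := conjS_le_normalizer hnorm
  set S := (A' ⊓ A) ⊔ (B' ⊓ B) with hS
  have hS_le_AB : S ≤ A ⊔ B :=
    sup_le (inf_le_right.trans le_sup_left) (inf_le_right.trans le_sup_right)
  have hS_le_A'B' : S ≤ A' ⊔ B' :=
    sup_le (inf_le_left.trans le_sup_left) (inf_le_left.trans le_sup_right)
  have hS_le_inf : S ≤ conjS g (A ⊔ B) ⊓ (A ⊔ B) := by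
    rw [hconj_sup]; exact le_inf hS_le_A'B' hS_le_AB
  constructor
  · -- finite relindex in A ⊔ B
    have h1 : S.relIndex (A ⊔ B) ≠ 0 :=
      sup_relindex_ne_zero hnorm inf_le_right inf_le_right (hA g).1 (hB g).1
    intro h0
    exact h1 (Subgroup.relIndex_eq_zero_of_le_left hS_le_inf h0)
  · -- finite relindex in conjS g (A ⊔ B)
    have h2 : S.relIndex (A' ⊔ B') ≠ 0 :=
      sup_relindex_ne_zero hnorm' inf_le_left inf_le_left (hA g).2 (hB g).2
    rw [hconj_sup]
    intro h0
    exact h2 (Subgroup.relIndex_eq_zero_of_le_left (hconj_sup ▸ hS_le_inf) h0)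
end

section
/- Conversely, if there exists a subgroup N of G commensurable with H that is normalized by a subgroup K, then sup_{k∈K} |H : H ∩ kHk⁻¹| is finite. -/
lemma conjS_relindex {G : Type*} [Group G] (g : G) (A B : Subgroup G) :
    (conjS g A).relIndex (conjS g B) = A.relIndex B := by
  have h := Subgroup.relIndex_comap ((MulAut.conj g).toMonoidHom) (H := conjS g A) B
  simp only [conjS] at h ⊢
  rw [Subgroup.comap_map_eq_self_of_injective (MulAut.conj g).injective] at h
  exact h.symm

lemma conjS_mono {G : Type*} [Group G] (g : G) {A B : Subgroup G} (h : A ≤ B) :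
    conjS g A ≤ conjS g B := Subgroup.map_mono h

theorem stmt_4 {G : Type*} [Group G] (H K N : Subgroup G)
    (hcomm : Subgroup.Commensurable H N) (hnorm : ∀ k ∈ K, conjS k N = N) :
    ∃ n : ℕ, ∀ k ∈ K,
      0 < (H ⊓ conjS k H).relIndex H ∧ (H ⊓ conjS k H).relIndex H ≤ n := by
  set M := H ⊓ N with hM
  have hMN : M.relIndex N ≠ 0 := by
    rw [hM, Subgroup.inf_relIndex_right]; exact hcomm.1
  have hMH : M.relIndex H ≠ 0 := by
    rw [hM, inf_comm, Subgroup.inf_relIndex_right]; exact hcomm.2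
  have hMleN : M ≤ N := inf_le_right
  have hMleH : M ≤ H := inf_le_left
  refine ⟨M.relIndex N * M.relIndex H, fun k hk => ?_⟩
  have hconjN : (conjS k M).relIndex N = M.relIndex N := by
    conv_lhs => rw [← hnorm k hk]
    rw [conjS_relindex]
  have hconjNne : (conjS k M).relIndex N ≠ 0 := by rw [hconjN]; exact hMN
  have h1 : (conjS k M).relIndex M ≠ 0 := fun h =>
    hconjNne (Subgroup.relIndex_eq_zero_of_le_right hMleN h)
  have h2 : (conjS k M).relIndex M ≤ M.relIndex N := by
    have := Subgroup.relIndex_le_of_le_right (H := conjS k M) hMleN hconjNne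
    rwa [hconjN] at this
  set A := M ⊓ conjS k M with hA
  have hAM : A.relIndex M = (conjS k M).relIndex M := by
    rw [hA, inf_comm, Subgroup.inf_relIndex_right]
  have hAleM : A ≤ M := inf_le_left
  have hAH : A.relIndex H = (conjS k M).relIndex M * M.relIndex H := by
    rw [← Subgroup.relIndex_mul_relIndex A M H hAleM hMleH, hAM]
  have hAHne : A.relIndex H ≠ 0 := hAH ▸ mul_ne_zero h1 hMH
  have hAle : A ≤ H ⊓ conjS k H :=
    le_inf (hAleM.trans hMleH) (inf_le_right.trans (conjS_mono k hMleH))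
  constructor
  · exact Nat.pos_of_ne_zero fun h => hAHne (Subgroup.relIndex_eq_zero_of_le_left hAle h)
  · calc (H ⊓ conjS k H).relIndex H ≤ A.relIndex H :=
          Subgroup.relIndex_le_of_le_left hAle hAHne
      _ = (conjS k M).relIndex M * M.relIndex H := hAH
      _ ≤ M.relIndex N * M.relIndex H := Nat.mul_le_mul_right _ h2
end
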